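/- Let R be a Noetherian ring, S a Noetherian ring, f : R → S a ring homomorphism, and M a finitely generated S-module. Then the set of primes of R associated to M (viewed as an R-module via f) equals the set of contractions f⁻¹(Q) for Q ranging over the S-associated primes of M. In particular, Ass_R M is finite. -/

import Mathlib

open Submodule

private lemma colonBotEq {R M : Type*} [CommRing R] [AddCommGroup M] [Module R M] (x : M) :
    (⊥ : Submodule R M).colon {x} = (R ∙ x).annihilator := by
  ext r
  rw [mem_colon_singleton, mem_annihilator_span_singleton, Submodule.mem_bot]

private lemma iapIff {R M : Type*} [CommRing R] [IsNoetherianRing R] [AddCommGroup M]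
    [Module R M] {I : Ideal R} :
    IsAssociatedPrime I M ↔ I.IsPrime ∧ ∃ x : M, I = (R ∙ x).annihilator := by
  rw [isAssociatedPrime_iff]
  simp_rw [colonBotEq]

/-- Annihilator of a nonzero multiple of `x` equals the annihilator of `x`,
when the latter is prime. -/
private lemma ann_smul_eq {S M : Type*} [CommRing S] [AddCommGroup M] [Module S M]
    {x : M} (hp : ((S ∙ x).annihilator).IsPrime) {s : S} (hs : s • x ≠ 0) :
    (S ∙ (s • x)).annihilator = (S ∙ x).annihilator := by
  have hsnot : s ∉ (S ∙ x).annihilator := by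
    rw [mem_annihilator_span_singleton]; exact hs
  ext t
  rw [mem_annihilator_span_singleton, mem_annihilator_span_singleton]
  constructor
  · intro ht
    have h2 : (t * s) • x = 0 := by rw [mul_smul]; exact ht
    have h3 : t * s ∈ (S ∙ x).annihilator := by
      rw [mem_annihilator_span_singleton]; exact h2
    rcases hp.mem_or_mem h3 with h | h
    · rwa [mem_annihilator_span_singleton] at h
    · exact absurd h hsnot
  · intro ht
    rw [smul_comm, ht, smul_zero]

/-- All associated primes of the cyclic module `S ∙ x` equal `ann x` when it is prime. -/
private lemma ass_span_singleton {S M : Type*} [CommRing S] [IsNoetherianRing S] [AddCommGroup M] [Module S M]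
    {x : M} (hp : ((S ∙ x).annihilator).IsPrime) {q : Ideal S}
    (hq : IsAssociatedPrime q ↥(S ∙ x)) : q = (S ∙ x).annihilator := by
  obtain ⟨hqp, y, rfl⟩ := iapIff.mp hq
  have hy0 : (y : M) ≠ 0 := by
    intro h
    apply hqp.ne_top
    have hy : y = 0 := Subtype.ext h
    rw [hy, Submodule.span_singleton_eq_bot.mpr rfl, Submodule.annihilator_bot]
  have key : (S ∙ y).annihilator = (S ∙ (y : M)).annihilator := by
    ext t
    rw [mem_annihilator_span_singleton, mem_annihilator_span_singleton]
    constructor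
    · intro h
      have := congrArg (Subtype.val) h
      simpa using this
    · intro h
      exact Subtype.ext (by simpa using h)
  obtain ⟨s, hs⟩ := Submodule.mem_span_singleton.mp y.2
  rw [key, ← hs]
  exact ann_smul_eq hp (hs ▸ hy0)

/-- An associated prime of `M` is an associated prime of `N` or of `M ⧸ N`. -/
private lemma ass_sub_or_quot {S M : Type*} [CommRing S] [IsNoetherianRing S] [AddCommGroup M] [Module S M]
    (N : Submodule S M) {P : Ideal S} (hP : IsAssociatedPrime P M) :
    IsAssociatedPrime P ↥N ∨ IsAssociatedPrime P (M ⧸ N) := by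
  obtain ⟨hprime, x, rfl⟩ := iapIff.mp hP
  by_cases h : ∃ s : S, s • x ∈ N ∧ s • x ≠ 0
  · obtain ⟨s, hsN, hs0⟩ := h
    left
    refine iapIff.mpr ⟨hprime, ⟨s • x, hsN⟩, ?_⟩
    have key : (S ∙ (⟨s • x, hsN⟩ : N)).annihilator = (S ∙ (s • x)).annihilator := by
      ext t
      rw [mem_annihilator_span_singleton, mem_annihilator_span_singleton]
      constructor
      · intro ht
        simpa using congrArg Subtype.val ht
      · intro ht
        exact Subtype.ext (by simpa using ht)
    rw [key, ann_smul_eq hprime hs0]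
  · right
    push_neg at h
    refine iapIff.mpr ⟨hprime, N.mkQ x, ?_⟩
    ext t
    rw [mem_annihilator_span_singleton, mem_annihilator_span_singleton, ← map_smul,
      Submodule.mkQ_apply, Submodule.Quotient.mk_eq_zero]
    constructor
    · intro ht
      rw [ht]
      exact N.zero_mem
    · intro ht
      exact h t ht

/-- Finiteness of associated primes of a finitely generated module
over a Noetherian ring. -/
private lemma assFinite (S M : Type*) [CommRing S] [IsNoetherianRing S] [AddCommGroup M]
    [Module S M] [Module.Finite S M] : (associatedPrimes S M).Finite := by
  have hN : IsNoetherian S M := isNoetherian_of_isNoetherianRing_of_finite S M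
  have key : ∀ N : Submodule S M, (associatedPrimes S (M ⧸ N)).Finite := by
    intro N
    induction N using IsNoetherian.induction with
    | hgt N IH =>
      by_cases hNtop : N = ⊤
      · have : Subsingleton (M ⧸ N) := by
          rw [Submodule.Quotient.subsingleton_iff]; exact hNtop
        rw [associatedPrimes.eq_empty_of_subsingleton]
        exact Set.finite_empty
      · have : Nontrivial (M ⧸ N) :=
          Submodule.Quotient.nontrivial_iff.mpr hNtop
        obtain ⟨p, hp'⟩ := associatedPrimes.nonempty S (M ⧸ N)
        obtain ⟨hpp, xb, hxb⟩ := iapIff.mp hp'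
        have hxb0 : xb ≠ 0 := by
          rintro rfl
          apply hpp.ne_top
          rw [hxb, Submodule.span_singleton_eq_bot.mpr rfl, Submodule.annihilator_bot]
        set K : Submodule S (M ⧸ N) := S ∙ xb with hK
        set N' : Submodule S M := K.comap N.mkQ with hN'
        have hle : N ≤ N' := by
          intro n hn
          rw [hN', Submodule.mem_comap, Submodule.mkQ_apply,
            (Submodule.Quotient.mk_eq_zero N).mpr hn]
          exact K.zero_mem
        have hlt : N < N' := by
          obtain ⟨x, hx⟩ := Submodule.Quotient.mk_surjective N xb
          refine lt_of_le_of_ne hle fun hEq => ?_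
          have hxN' : x ∈ N' := by
            rw [hN', Submodule.mem_comap, Submodule.mkQ_apply, hx]
            exact Submodule.mem_span_singleton_self xb
          rw [← hEq] at hxN'
          exact hxb0 (hx ▸ (Submodule.Quotient.mk_eq_zero N).mpr hxN')
        have hfin' := IH N' hlt
        have hmap : N'.map N.mkQ = K := by
          rw [hN', Submodule.map_comap_eq, Submodule.range_mkQ, top_inf_eq]
        have e : ((M ⧸ N) ⧸ N'.map N.mkQ) ≃ₗ[S] M ⧸ N' :=
          Submodule.quotientQuotientEquivQuotient N N' hle
        refine Set.Finite.subset ((Set.finite_singleton p).union hfin') ?_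
        intro q hq
        rcases ass_sub_or_quot K hq with h | h
        · left
          exact hxb ▸ ass_span_singleton (hxb ▸ hpp) h
        · right
          rw [← hmap] at h
          exact (e.isAssociatedPrime_iff).mp h
  have e : (M ⧸ (⊥ : Submodule S M)) ≃ₗ[S] M :=
    Submodule.quotEquivOfEqBot ⊥ rfl
  rw [← LinearEquiv.AssociatedPrimes.eq e]
  exact key ⊥

theorem stmt0 (R S : Type) [CommRing R] [CommRing S] [IsNoetherianRing R] [IsNoetherianRing S]
    (f : R →+* S) (M : Type) [AddCommGroup M] [Module S M] [Module.Finite S M]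
    [Module R M] (hcomp : ∀ (r : R) (m : M), r • m = f r • m) :
    associatedPrimes R M = (fun Q => Ideal.comap f Q) '' associatedPrimes S M ∧
      (associatedPrimes R M).Finite := by
  have hmain : associatedPrimes R M = (fun Q => Ideal.comap f Q) '' associatedPrimes S M := by
    apply Set.eq_of_subset_of_subset
    · -- hard direction: every R-associated prime is a contraction
      rintro P hP
      obtain ⟨hPp, x, rfl⟩ := iapIff.mp hP
      set P := (Submodule.span R {x}).annihilator with hPdef
      have hPx : ∀ r : R, r ∈ P ↔ r • x = 0 := fun r =>
        mem_annihilator_span_singleton x r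
      have hx0 : x ≠ 0 := by
        rintro rfl
        apply hPp.ne_top
        rw [hPdef, Submodule.span_singleton_eq_bot.mpr rfl, Submodule.annihilator_bot]
      -- "good" multipliers
      set good : S → Prop := fun s => s • x ≠ 0 ∧ ∀ r : R, f r • (s • x) = 0 → r • x = 0
        with hgood
      set A : Set (Ideal S) := { J | ∃ s : S, good s ∧ J = (S ∙ (s • x)).annihilator }
        with hA
      have hane : A.Nonempty := by
        refine ⟨(S ∙ ((1 : S) • x)).annihilator, 1, ⟨?_, ?_⟩, rfl⟩
        · rw [one_smul]; exact hx0
        · intro r hr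
          rw [one_smul, ← hcomp] at hr
          exact hr
      obtain ⟨Q, ⟨s₀, hs₀good, hQeq⟩, hQmax⟩ :=
        set_has_maximal_iff_noetherian.mpr (inferInstance : IsNoetherianRing S) A hane
      -- claim 1 : for r ∉ P, the annihilator of (f r * s₀) • x is again Q
      have claim1 : ∀ r : R, r • x ≠ 0 → (S ∙ ((f r * s₀) • x)).annihilator = Q := by
        intro r hr
        have hgood' : good (f r * s₀) := by
          constructor
          · intro h0
            rw [mul_smul] at h0
            exact hr (hs₀good.2 r h0)
          · intro r' hr'
            rw [mul_smul] at hr'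
            have h2 : f (r' * r) • (s₀ • x) = 0 := by
              rw [map_mul, mul_smul]
              exact hr'
            have hmem : r' * r ∈ P := (hPx _).mpr (hs₀good.2 (r' * r) h2)
            rcases hPp.mem_or_mem hmem with h | h
            · exact (hPx _).mp h
            · exact absurd ((hPx _).mp h) hr
        have hge : Q ≤ (S ∙ ((f r * s₀) • x)).annihilator := by
          intro t ht
          rw [hQeq, mem_annihilator_span_singleton] at ht
          rw [mem_annihilator_span_singleton, mul_smul, smul_comm, ht, smul_zero]
        exact (hge.eq_of_not_lt (hQmax _ ⟨f r * s₀, hgood', rfl⟩)).symm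
      -- Q is prime
      have hQne : Q ≠ ⊤ := by
        intro h
        have : (1 : S) ∈ Q := h ▸ Submodule.mem_top
        rw [hQeq, mem_annihilator_span_singleton, one_smul] at this
        exact hs₀good.1 this
      have hQprime : Ideal.IsPrime Q := by
        refine ⟨hQne, ?_⟩
        intro a b hab
        rw [or_iff_not_imp_left]
        intro ha
        have ha' : a • s₀ • x ≠ 0 := by
          intro h
          apply ha
          rw [hQeq, mem_annihilator_span_singleton]
          exact h
        have hgood' : good (a * s₀) := by
          constructor
          · rwa [mul_smul]
          · intro r' hr'
            by_contra h0
            have h1 : (S ∙ ((f r' * s₀) • x)).annihilator = Q := claim1 r' h0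
            apply ha
            rw [← h1, mem_annihilator_span_singleton, mul_smul, smul_comm]
            rw [mul_smul] at hr'
            exact hr'
        have hge : Q ≤ (S ∙ ((a * s₀) • x)).annihilator := by
          intro t ht
          rw [hQeq, mem_annihilator_span_singleton] at ht
          rw [mem_annihilator_span_singleton, mul_smul, smul_comm, ht, smul_zero]
        have heq : Q = (S ∙ ((a * s₀) • x)).annihilator :=
          hge.eq_of_not_lt (hQmax _ ⟨a * s₀, hgood', rfl⟩)
        rw [heq, mem_annihilator_span_singleton, mul_smul, smul_comm, ← mul_smul]
        rw [hQeq, mem_annihilator_span_singleton] at hab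
        exact hab
      -- Q is an associated prime of M over S, and its contraction is P
      refine ⟨Q, iapIff.mpr ⟨hQprime, s₀ • x, hQeq⟩, ?_⟩
      ext r
      simp only [Ideal.mem_comap]
      rw [hQeq, mem_annihilator_span_singleton]
      constructor
      · intro h
        exact (hPx r).mpr (hs₀good.2 r h)
      · intro h
        rw [smul_comm, ← hcomp, (hPx r).mp h, smul_zero]
    · -- easy direction: contractions of S-associated primes are R-associated
      rintro _ ⟨Q, hQ, rfl⟩
      obtain ⟨hQp, x, rfl⟩ := iapIff.mp hQ
      refine iapIff.mpr ⟨Ideal.comap_isPrime f _, x, ?_⟩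
      ext r
      simp only [Ideal.mem_comap]
      rw [mem_annihilator_span_singleton, mem_annihilator_span_singleton, hcomp]
  refine ⟨hmain, ?_⟩
  rw [hmain]
  exact (assFinite S M).image _
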